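/- For every n ≥ 2 and every number m of homogeneous divisible items, there exists a mechanism for chores that is strictly truthful, envy-free for chores, and proportional for chores on all normalized additive cost profiles. -/

import Mathlib

open Finset

noncomputable section

/-- Value (cost or utility) of a fractional bundle `x` under additive item values `c`. -/
def dotVal {m : ℕ} (c x : Fin m → ℝ) : ℝ := ∑ o, x o * c o

/-- `x` is a fractional allocation of the `m` items among the `n` agents. -/
def IsFracAlloc {n m : ℕ} (x : Fin n → Fin m → ℝ) : Prop :=
  (∀ i o, 0 ≤ x i o ∧ x i o ≤ 1) ∧ (∀ o, ∑ i, x i o = 1)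

/-- A normalized profile: nonnegative item values summing to `1` for each agent. -/
def NormalizedProfile (n m : ℕ) (c : Fin n → Fin m → ℝ) : Prop :=
  (∀ i o, 0 ≤ c i o) ∧ (∀ i, ∑ o, c i o = 1)

/-- Squared Euclidean norm of a bundle. -/
def sqn {m : ℕ} (q : Fin m → ℝ) : ℝ := ∑ o, q o ^ 2

/-- Inner product of two bundles. -/
def ip {m : ℕ} (p q : Fin m → ℝ) : ℝ := ∑ o, p o * q o

/-- The quadratic-scoring mechanism. -/
def mech (n : ℕ) {m : ℕ} (c : Fin n → Fin m → ℝ) (i : Fin n) (o : Fin m) : ℝ :=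
  1/(n:ℝ) + (1/(8*(n:ℝ))) * ((sqn (c i) - 2 * c i o)
    - (1/(n:ℝ)) * ∑ j, (sqn (c j) - 2 * c j o))

lemma sq_expand {m : ℕ} (p q : Fin m → ℝ) :
    sqn p - 2 * ip p q + sqn q = ∑ o, (p o - q o) ^ 2 := by
  have h : ∀ o : Fin m, (p o - q o) ^ 2 = p o ^ 2 - 2 * (p o * q o) + q o ^ 2 := by
    intro o; ring
  simp only [sqn, ip, h, Finset.sum_add_distrib, Finset.sum_sub_distrib, Finset.mul_sum]

lemma ip_self {m : ℕ} (p : Fin m → ℝ) : ip p p = sqn p := by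
  simp [ip, sqn, sq]

lemma dot_mech {n m : ℕ} (c : Fin n → Fin m → ℝ) (p : Fin m → ℝ) (hp : ∑ o, p o = 1)
    (i : Fin n) :
    dotVal p (mech n c i) = 1/(n:ℝ) + (1/(8*(n:ℝ))) * ((sqn (c i) - 2 * ip (c i) p)
      - (1/(n:ℝ)) * ∑ j, (sqn (c j) - 2 * ip (c j) p)) := by
  have key : ∀ q : Fin m → ℝ, ∑ o, (sqn q - 2 * q o) * p o = sqn q - 2 * ip q p := by
    intro q
    have : ∀ o, (sqn q - 2 * q o) * p o = sqn q * p o - 2 * (q o * p o) := by intro o; ring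
    simp only [this, Finset.sum_sub_distrib, ← Finset.mul_sum, hp, mul_one, ip]
  have swap : ∑ o, (∑ j, (sqn (c j) - 2 * c j o)) * p o
      = ∑ j, (sqn (c j) - 2 * ip (c j) p) := by
    simp only [Finset.sum_mul]
    rw [Finset.sum_comm]
    exact Finset.sum_congr rfl fun j _ => key (c j)
  have expand : ∀ o, (1/(n:ℝ) + (1/(8*(n:ℝ))) * ((sqn (c i) - 2 * c i o)
      - (1/(n:ℝ)) * ∑ j, (sqn (c j) - 2 * c j o))) * p o
      = (1/(n:ℝ)) * p o + (1/(8*(n:ℝ))) * ((sqn (c i) - 2 * c i o) * p o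
        - (1/(n:ℝ)) * ((∑ j, (sqn (c j) - 2 * c j o)) * p o)) := by
    intro o; ring
  simp only [dotVal, mech]
  rw [Finset.sum_congr rfl fun o _ => expand o, Finset.sum_add_distrib,
    ← Finset.mul_sum, hp, mul_one, ← Finset.mul_sum, Finset.sum_sub_distrib,
    ← Finset.mul_sum, key (c i), swap]

lemma sum_update_eq {n m : ℕ} (c : Fin n → Fin m → ℝ) (i : Fin n) (c' p : Fin m → ℝ) :
    ∑ j, (sqn (Function.update c i c' j) - 2 * ip (Function.update c i c' j) p)
      = (∑ j, (sqn (c j) - 2 * ip (c j) p))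
        + ((sqn c' - 2 * ip c' p) - (sqn (c i) - 2 * ip (c i) p)) := by
  have h : ∀ j, sqn (Function.update c i c' j) - 2 * ip (Function.update c i c' j) p
      = (sqn (c j) - 2 * ip (c j) p)
        + (if j = i then (sqn c' - 2 * ip c' p) - (sqn (c i) - 2 * ip (c i) p) else 0) := by
    intro j
    rcases eq_or_ne j i with rfl | hji
    · simp
    · simp [Function.update_of_ne hji, hji]
  rw [Finset.sum_congr rfl fun j _ => h j, Finset.sum_add_distrib,
    Finset.sum_ite_eq' Finset.univ i, if_pos (Finset.mem_univ i)]

/-- The gain from misreporting is a positive multiple of the squared distance. -/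
lemma truth_gain {n m : ℕ} (c : Fin n → Fin m → ℝ) (i : Fin n) (c' : Fin m → ℝ)
    (hci : ∑ o, c i o = 1) :
    dotVal (c i) (mech n (Function.update c i c') i) - dotVal (c i) (mech n c i)
      = (1/(8*(n:ℝ))) * (1 - 1/(n:ℝ)) * ∑ o, (c' o - c i o) ^ 2 := by
  rw [dot_mech (Function.update c i c') (c i) hci i, dot_mech c (c i) hci i,
    sum_update_eq, Function.update_self, ← sq_expand c' (c i), ip_self]
  ring

theorem exists_strictly_truthful_ef_prop_chores (n m : ℕ) (hn : 2 ≤ n) :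
    ∃ M : (Fin n → Fin m → ℝ) → Fin n → Fin m → ℝ,
      -- M outputs fractional allocations
      (∀ c, NormalizedProfile n m c → IsFracAlloc (M c)) ∧
      -- truthful for chores
      (∀ c, NormalizedProfile n m c → ∀ (i : Fin n) (c' : Fin m → ℝ),
        (∀ o, 0 ≤ c' o) → (∑ o, c' o = 1) →
        dotVal (c i) (M c i) ≤ dotVal (c i) (M (Function.update c i c') i)) ∧
      -- strictly truthful: the inequality is strict whenever the misreport differs
      (∀ c, NormalizedProfile n m c → ∀ (i : Fin n) (c' : Fin m → ℝ),
        (∀ o, 0 ≤ c' o) → (∑ o, c' o = 1) → c' ≠ c i →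
        dotVal (c i) (M c i) < dotVal (c i) (M (Function.update c i c') i)) ∧
      -- envy-free for chores
      (∀ c, NormalizedProfile n m c → ∀ i j : Fin n,
        dotVal (c i) (M c i) ≤ dotVal (c i) (M c j)) ∧
      -- proportional for chores
      (∀ c, NormalizedProfile n m c → ∀ i : Fin n,
        dotVal (c i) (M c i) ≤ 1 / (n : ℝ)) := by
  have hN2 : (2:ℝ) ≤ (n:ℝ) := by exact_mod_cast hn
  have hN0 : (0:ℝ) < (n:ℝ) := by linarith
  have hNne : ((n:ℝ)) ≠ 0 := ne_of_gt hN0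
  refine ⟨mech n, ?_, ?_, ?_, ?_, ?_⟩
  · -- fractional allocation
    rintro c ⟨hc0, hc1⟩
    have hle1 : ∀ j o, c j o ≤ 1 := by
      intro j o
      have := Finset.single_le_sum (f := c j) (fun o _ => hc0 j o) (Finset.mem_univ o)
      rwa [hc1 j] at this
    have hsqn0 : ∀ j, 0 ≤ sqn (c j) := fun j =>
      Finset.sum_nonneg fun o _ => sq_nonneg _
    have hsqn1 : ∀ j, sqn (c j) ≤ 1 := by
      intro j
      calc sqn (c j) = ∑ o, c j o ^ 2 := rfl
        _ ≤ ∑ o, c j o := Finset.sum_le_sum fun o _ => by nlinarith [hc0 j o, hle1 j o]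
        _ = 1 := hc1 j
    constructor
    · intro i o
      set S : ℝ := ∑ j, (sqn (c j) - 2 * c j o) with hS
      set A : ℝ := sqn (c i) - 2 * c i o with hA
      have hAlo : -2 ≤ A := by have := hsqn0 i; have := hle1 i o; simp only [hA]; linarith
      have hAhi : A ≤ 1 := by have := hsqn1 i; have := hc0 i o; simp only [hA]; linarith
      have hShi : S ≤ (n:ℝ) := by
        calc S ≤ ∑ _j : Fin n, (1:ℝ) := Finset.sum_le_sum fun j _ => by
              have := hsqn1 j; have := hc0 j o; linarith
          _ = (n:ℝ) := by simp
      have hSlo : -(2*(n:ℝ)) ≤ S := by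
        calc -(2*(n:ℝ)) = ∑ _j : Fin n, (-2:ℝ) := by simp [mul_comm]
          _ ≤ S := Finset.sum_le_sum fun j _ => by
              have := hsqn0 j; have := hle1 j o; linarith
      have hrep : mech n c i o = (8*(n:ℝ) + (n:ℝ)*A - S)/(8*(n:ℝ)^2) := by
        simp only [mech, ← hS, ← hA]
        field_simp
        ring
      constructor
      · rw [hrep]
        apply div_nonneg _ (by positivity)
        nlinarith
      · rw [hrep, div_le_one (by positivity)]
        nlinarith
    · intro o
      simp only [mech]
      rw [Finset.sum_add_distrib, Finset.sum_const, ← Finset.mul_sum,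
        Finset.sum_sub_distrib, Finset.sum_const, Finset.card_univ, Fintype.card_fin]
      simp only [nsmul_eq_mul]
      field_simp
      ring
  · -- truthful
    rintro c ⟨hc0, hc1⟩ i c' hc'0 hc'1
    have h := truth_gain c i c' (hc1 i)
    have h1 : 0 ≤ (1/(8*(n:ℝ))) * (1 - 1/(n:ℝ)) * ∑ o, (c' o - c i o) ^ 2 := by
      have : (1:ℝ)/(n:ℝ) ≤ 1/2 := by
        apply div_le_div_of_nonneg_left <;> linarith
      have hs : 0 ≤ ∑ o, (c' o - c i o) ^ 2 :=
        Finset.sum_nonneg fun o _ => sq_nonneg _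
      have : 0 ≤ (1/(8*(n:ℝ))) * (1 - 1/(n:ℝ)) := by
        apply mul_nonneg (by positivity); linarith
      exact mul_nonneg this hs
    linarith
  · -- strictly truthful
    rintro c ⟨hc0, hc1⟩ i c' hc'0 hc'1 hne
    have h := truth_gain c i c' (hc1 i)
    obtain ⟨o, ho⟩ : ∃ o, c' o ≠ c i o := by
      by_contra hcon
      push_neg at hcon
      exact hne (funext hcon)
    have hs : 0 < ∑ o, (c' o - c i o) ^ 2 := by
      apply Finset.sum_pos' (fun o _ => sq_nonneg _)
      refine ⟨o, Finset.mem_univ o, ?_⟩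
      have h2 : c' o - c i o ≠ 0 := sub_ne_zero.mpr ho
      exact lt_of_le_of_ne (sq_nonneg _) (Ne.symm (pow_ne_zero 2 h2))
    have hK : 0 < (1/(8*(n:ℝ))) * (1 - 1/(n:ℝ)) := by
      have : (1:ℝ)/(n:ℝ) ≤ 1/2 := by
        apply div_le_div_of_nonneg_left <;> linarith
      apply mul_pos (by positivity); linarith
    nlinarith
  · -- envy-free
    rintro c ⟨hc0, hc1⟩ i j
    have e : dotVal (c i) (mech n c j) - dotVal (c i) (mech n c i)
        = (1/(8*(n:ℝ))) * ∑ o, (c j o - c i o) ^ 2 := by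
      rw [dot_mech c (c i) (hc1 i) j, dot_mech c (c i) (hc1 i) i,
        ← sq_expand (c j) (c i), ip_self]
      ring
    have hs : 0 ≤ ∑ o, (c j o - c i o) ^ 2 :=
      Finset.sum_nonneg fun o _ => sq_nonneg _
    nlinarith [mul_nonneg (by positivity : (0:ℝ) ≤ 1/(8*(n:ℝ))) hs]
  · -- proportional
    rintro c ⟨hc0, hc1⟩ i
    have e : 1/(n:ℝ) - dotVal (c i) (mech n c i)
        = (1/(8*(n:ℝ))) * (1/(n:ℝ)) * ∑ j, ∑ o, (c j o - c i o) ^ 2 := by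
      rw [dot_mech c (c i) (hc1 i) i, ip_self]
      have h : ∀ j : Fin n, ∑ o, (c j o - c i o) ^ 2
          = (sqn (c j) - 2 * ip (c j) (c i)) + sqn (c i) := by
        intro j; rw [← sq_expand (c j) (c i)]
      rw [Finset.sum_congr rfl fun j _ => h j, Finset.sum_add_distrib,
        Finset.sum_const, Finset.card_univ, Fintype.card_fin]
      simp only [nsmul_eq_mul]
      field_simp
      ring
    have hs : 0 ≤ ∑ j : Fin n, ∑ o, (c j o - c i o) ^ 2 :=
      Finset.sum_nonneg fun j _ => Finset.sum_nonneg fun o _ => sq_nonneg _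
    nlinarith [mul_nonneg (mul_nonneg (by positivity : (0:ℝ) ≤ 1/(8*(n:ℝ)))
      (by positivity : (0:ℝ) ≤ 1/(n:ℝ))) hs]
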